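/- Let G be an infinite finitely generated amenable group. Then there exists a G-effectively closed subshift (over the alphabet {0,1,2}) which is not sofic. -/

import Mathlib

open scoped Classical

noncomputable section

namespace SDG

/-! ### Relativized computability -/

/-- Partial recursive functions `ℕ →. ℕ` relative to an oracle `O`. -/
inductive NatPartrecIn (O : ℕ →. ℕ) : (ℕ →. ℕ) → Prop
  | oracle : NatPartrecIn O O
  | zero : NatPartrecIn O (pure 0)
  | succ : NatPartrecIn O Nat.succ
  | left : NatPartrecIn O ↑fun n : ℕ => n.unpair.1
  | right : NatPartrecIn O ↑fun n : ℕ => n.unpair.2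
  | pair {f g} : NatPartrecIn O f → NatPartrecIn O g →
      NatPartrecIn O fun n => Nat.pair <$> f n <*> g n
  | comp {f g} : NatPartrecIn O f → NatPartrecIn O g →
      NatPartrecIn O fun n => g n >>= f
  | prec {f g} : NatPartrecIn O f → NatPartrecIn O g →
      NatPartrecIn O (Nat.unpaired fun a n =>
        n.rec (f a) fun y IH => do let i ← IH; g (Nat.pair a (Nat.pair y i)))
  | rfind {f} : NatPartrecIn O f →
      NatPartrecIn O fun a => Nat.rfind fun n => (fun m => m = 0) <$> f (Nat.pair a n)

/-- A partial function between `Primcodable` types is partial recursive in the oracle `O`. -/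
def PartrecIn (O : ℕ →. ℕ) {α σ : Type} [Primcodable α] [Primcodable σ] (f : α →. σ) : Prop :=
  NatPartrecIn O fun n =>
    Part.bind (Part.ofOption (Encodable.decode (α := α) n)) fun a => (f a).map Encodable.encode

/-- A predicate is recursively enumerable in the oracle `O` if it is the domain of a partial
function recursive in `O`. -/
def RePredIn (O : ℕ →. ℕ) {α : Type} [Primcodable α] (p : α → Prop) : Prop :=
  PartrecIn O fun a => Part.assert (p a) fun _ => Part.some ()

/-- The characteristic function (as an oracle `ℕ →. ℕ`) of a set `L` of elements of a
`Primcodable` type: on the code of an element of `L` it answers `1`, elsewhere `0`. -/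
def charFun {α : Type} [Primcodable α] (L : Set α) : ℕ →. ℕ :=
  fun n => Part.some (if ∃ a ∈ L, Encodable.encode a = n then 1 else 0)

/-! ### Finitely generated groups, words and pattern codings -/

variable {G : Type} [Group G]

/-- The group element represented by a word over the generators `S`. -/
def wordEval {k : ℕ} (S : Fin k → G) (w : List (Fin k)) : G :=
  (w.map S).prod

/-- `S : Fin k → G` is a finite symmetric generating family containing the identity. -/
def IsGenData {k : ℕ} (S : Fin k → G) : Prop :=
  (∃ i, S i = 1) ∧ (∀ i, ∃ j, S j = (S i)⁻¹) ∧ Subgroup.closure (Set.range S) = ⊤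

/-- The word problem of `G` with respect to the generating family `S`. -/
def WP {k : ℕ} (S : Fin k → G) : Set (List (Fin k)) :=
  {w | wordEval S w = 1}

/-- A pattern coding over the alphabet `A`: a finite list of pairs (word, symbol). -/
abbrev PatternCoding (k : ℕ) (A : Type) : Type :=
  List (List (Fin k) × A)

/-- The subshift defined by a set `C` of pattern codings: configurations in which no translate
of a coded pattern occurs. -/
def XC {k : ℕ} (S : Fin k → G) {A : Type} (C : Set (PatternCoding k A)) : Set (G → A) :=
  {x | ¬ ∃ (g : G) (c : PatternCoding k A), c ∈ C ∧ ∀ p ∈ c, x (g * wordEval S p.1) = p.2}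

/-- A set is effectively closed if it is defined by a recursively enumerable set of
pattern codings. -/
def EffectivelyClosed {k : ℕ} (S : Fin k → G) {A : Type} [Primcodable A]
    (X : Set (G → A)) : Prop :=
  ∃ C : Set (PatternCoding k A), REPred (· ∈ C) ∧ X = XC S C

/-- A set is `G`-effectively closed if it is defined by a set of pattern codings which is
recursively enumerable with oracle the word problem of `G`. -/
def GEffectivelyClosed {k : ℕ} (S : Fin k → G) {A : Type} [Primcodable A]
    (X : Set (G → A)) : Prop :=
  ∃ C : Set (PatternCoding k A), RePredIn (charFun (WP S)) (· ∈ C) ∧ X = XC S C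

/-- A pattern coding is consistent if words representing the same group element receive the
same symbol. -/
def Consistent {k : ℕ} (S : Fin k → G) {A : Type} (c : PatternCoding k A) : Prop :=
  ∀ p ∈ c, ∀ q ∈ c, wordEval S p.1 = wordEval S q.1 → p.2 = q.2

/-! ### Subshifts, SFTs, sofic subshifts -/

/-- `X ⊆ A^G` is a subshift: closed (for the product of the discrete topology) and
shift-invariant. -/
def IsSubshift {A : Type} (X : Set (G → A)) : Prop :=
  (letI : TopologicalSpace A := ⊥; IsClosed X) ∧
    ∀ x ∈ X, ∀ g : G, (fun h => x (g⁻¹ * h)) ∈ X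

/-- A pattern with finite support over the alphabet `A`. -/
structure Pattern (G : Type) (A : Type) where
  supp : Finset G
  val : (g : G) → g ∈ supp → A

/-- The pattern `p` occurs in the configuration `x` at position `g`. -/
def PatternOccurs {A : Type} (p : Pattern G A) (x : G → A) (g : G) : Prop :=
  ∀ (h : G) (hh : h ∈ p.supp), x (g * h) = p.val h hh

/-- The subshift defined by a set of forbidden patterns. -/
def XPat {A : Type} (Fs : Set (Pattern G A)) : Set (G → A) :=
  {x | ¬ ∃ (g : G) (p : Pattern G A), p ∈ Fs ∧ PatternOccurs p x g}

/-- A subshift of finite type: defined by a finite set of forbidden patterns. -/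
def IsSFT {A : Type} (X : Set (G → A)) : Prop :=
  ∃ Fs : Set (Pattern G A), Fs.Finite ∧ X = XPat Fs

/-- A witness that `X` is sofic: an SFT `Y` over a finite alphabet `B` together with a factor
code (continuous shift-equivariant surjection) from `Y` onto `X`. -/
structure SoficVia (G : Type) [Group G] {A : Type} (X : Set (G → A)) : Type 1 where
  B : Type
  finB : Fintype B
  Y : Set (G → B)
  sft : IsSFT Y
  subY : IsSubshift Y
  phi : (G → B) → (G → A)
  cont : letI : TopologicalSpace B := ⊥
         letI : TopologicalSpace A := ⊥
         ContinuousOn phi Y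
  equiv : ∀ y ∈ Y, ∀ g : G, phi (fun h => y (g⁻¹ * h)) = fun h => phi y (g⁻¹ * h)
  image : phi '' Y = X

/-- A subshift is sofic if it is the image of an SFT under a factor code. -/
def IsSofic {A : Type} (X : Set (G → A)) : Prop :=
  Nonempty (SoficVia G X)

/-- A factor code from `X` onto `Y`: continuous (discrete product topologies),
shift-equivariant and surjective. -/
def FactorCode {A B : Type} (X : Set (G → A)) (Y : Set (G → B))
    (φ : (G → A) → (G → B)) : Prop :=
  (letI : TopologicalSpace A := ⊥
   letI : TopologicalSpace B := ⊥
   ContinuousOn φ X) ∧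
  (∀ x ∈ X, ∀ g : G, φ (fun h => x (g⁻¹ * h)) = fun h => φ x (g⁻¹ * h)) ∧
  φ '' X = Y

/-- Two subshifts are conjugate if there is a shift-equivariant homeomorphism between them. -/
def Conjugate {A B : Type} (X : Set (G → A)) (Y : Set (G → B)) : Prop :=
  ∃ (φ : (G → A) → (G → B)) (ψ : (G → B) → (G → A)),
    FactorCode X Y φ ∧ FactorCode Y X ψ ∧
    (∀ x ∈ X, ψ (φ x) = x) ∧ (∀ y ∈ Y, φ (ψ y) = y)

/-- The one-or-less subshift: configurations with at most one occurrence of the symbol `1`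
(represented by `true`). -/
def Xle1 (G : Type) : Set (G → Bool) :=
  {x | ∀ g h : G, x g = true → x h = true → g = h}

/-! ### `G`-machines -/

/-- A `G`-machine: finite set of states, finite tape alphabet `A` with a blank symbol, initial
state, accepting states, and a transition function moving with the generators `Fin k`. -/
structure GMachine (k : ℕ) (A : Type) : Type 1 where
  Q : Type
  finQ : Fintype Q
  blank : A
  q0 : Q
  QF : Set Q
  delta : A × Q → A × Q × Fin k

/-- One step of a `G`-machine in the fixed head model: if `δ(x(1),q) = (a,q',s)` then the new
configuration is `σ_{s⁻¹} x̃` where `x̃` is `x` with the value at `1` replaced by `a`. -/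
def GMachine.step {k : ℕ} {A : Type} (M : GMachine k A) (S : Fin k → G) :
    (G → A) × M.Q → (G → A) × M.Q :=
  fun xq =>
    let t := M.delta (xq.1 1, xq.2)
    let xt : G → A := Function.update xq.1 1 t.1
    (fun h => xt (S t.2.2 * h), t.2.1)

/-- The configuration which equals the pattern `p` on its support and `blank` elsewhere. -/
def Pattern.config {A : Type} (p : Pattern G A) (blank : A) : G → A :=
  fun g => if h : g ∈ p.supp then p.val g h else blank

/-- The `G`-machine `M` accepts the pattern `p` if starting from the configuration `x^p` in the
initial state it eventually reaches an accepting state. -/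
def GMachine.Accepts {k : ℕ} {A : Type} (M : GMachine k A) (S : Fin k → G)
    (p : Pattern G A) : Prop :=
  ∃ n : ℕ, ((M.step S)^[n] (p.config M.blank, M.q0)).2 ∈ M.QF

/-- A set of patterns is `G`-recursively enumerable if some `G`-machine accepts exactly its
elements. -/
def GRecEnum {k : ℕ} (S : Fin k → G) {A : Type} (L : Set (Pattern G A)) : Prop :=
  ∃ M : GMachine k A, ∀ p : Pattern G A, M.Accepts S p ↔ p ∈ L

/-- The consistent pattern coding `c` defines the pattern `p`. -/
def Defines {k : ℕ} (S : Fin k → G) {A : Type} (c : PatternCoding k A)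
    (p : Pattern G A) : Prop :=
  (∀ g : G, g ∈ p.supp ↔ ∃ q ∈ c, wordEval S q.1 = g) ∧
  ∀ q ∈ c, ∀ hg : wordEval S q.1 ∈ p.supp, p.val (wordEval S q.1) hg = q.2

/-- `p(C)`: the set of patterns defined by the consistent pattern codings of `C`. -/
def patternsOf {k : ℕ} (S : Fin k → G) {A : Type} (C : Set (PatternCoding k A)) :
    Set (Pattern G A) :=
  {p | ∃ c ∈ C, Consistent S c ∧ Defines S c p}

/-- A set of patterns is closed by extensions if any pattern extending a pattern of the set
also belongs to the set. -/
def ClosedByExtensions {A : Type} (L : Set (Pattern G A)) : Prop :=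
  ∀ (p₁ p₂ : Pattern G A) (hsub : p₁.supp ⊆ p₂.supp),
    (∀ (g : G) (hg : g ∈ p₁.supp), p₂.val g (hsub hg) = p₁.val g hg) →
    p₁ ∈ L → p₂ ∈ L

/-! ### Balls, ends, amenability -/

/-- The ball of radius `n` in the word metric given by `S`. -/
def ballS {k : ℕ} (S : Fin k → G) (n : ℕ) : Set G :=
  {x | ∃ w : List (Fin k), w.length ≤ n ∧ wordEval S w = x}

/-- Adjacency in the Cayley graph restricted to the set `V`. -/
def Adj {k : ℕ} (S : Fin k → G) (V : Set G) (a b : G) : Prop :=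
  a ∈ V ∧ b ∈ V ∧ ∃ i, a * S i = b

/-- Reachability inside `V` in the Cayley graph of `(G,S)`. -/
def Reach {k : ℕ} (S : Fin k → G) (V : Set G) (a b : G) : Prop :=
  Relation.ReflTransGen (Adj S V) a b

/-- `G` has at least two ends: for some `n`, the complement of the ball of radius `n` in the
Cayley graph has at least two infinite connected components. -/
def HasTwoOrMoreEnds {k : ℕ} (S : Fin k → G) : Prop :=
  ∃ (n : ℕ) (x y : G), x ∉ ballS S n ∧ y ∉ ballS S n ∧
    {z | Reach S (ballS S n)ᶜ x z}.Infinite ∧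
    {z | Reach S (ballS S n)ᶜ y z}.Infinite ∧
    ¬ Reach S (ballS S n)ᶜ x y

/-- The Følner condition: `G` is amenable. -/
def FolnerAmenable (G : Type) [Group G] : Prop :=
  ∀ (K : Finset G) (ε : ℝ), 0 < ε →
    ∃ F : Finset G, F.Nonempty ∧ ∀ k ∈ K,
      ((F \ F.image (fun x => x * k)).card : ℝ) < ε * F.card

/-! ### `G × ℤ`, presentations, hardness and the domino problems -/

/-- Generators of `G × ℤ`: the generators of `G` paired with `0`, together with `(1,±1)`. -/
def prodGens {k : ℕ} (S : Fin k → G) : Fin (k + 2) → G × Multiplicative ℤ :=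
  fun i =>
    if h : (i : ℕ) < k then (S ⟨i, h⟩, 1)
    else if (i : ℕ) = k then (1, Multiplicative.ofAdd 1)
    else (1, Multiplicative.ofAdd (-1))

/-- The element of the free group over the generator indices represented by a word. -/
def freeWord {k : ℕ} (w : List (Fin k)) : FreeGroup (Fin k) :=
  (w.map FreeGroup.of).prod

/-- `G` is recursively presented with respect to `S`: there is a recursively enumerable set of
relators (words over the generators) whose normal closure in the free group over the
generator indices is the kernel of the evaluation map. -/
def RecursivelyPresented {k : ℕ} (S : Fin k → G) : Prop :=
  ∃ R : Set (List (Fin k)), REPred (· ∈ R) ∧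
    MonoidHom.ker (FreeGroup.lift S) = Subgroup.normalClosure (freeWord '' R)

/-- `L` is hard for the class of predicates recursively enumerable in the oracle `O`
(equivalently, hard for the halting problem of machines with oracle `O`): every
such predicate many-one reduces to `L` via a computable function. -/
def OracleREHard {α : Type} [Primcodable α] (O : ℕ →. ℕ) (L : Set α) : Prop :=
  ∀ p : ℕ → Prop, RePredIn O p → ∃ f : ℕ → α, Computable f ∧ ∀ n, p n ↔ f n ∈ L

/-- The domino problem of `(K,T)`: pairs `(N, F)` of an alphabet size and a finite list of
pattern codings over `ℕ` such that no configuration with symbols `< N` avoids `F`. -/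
def DP {K : Type} [Group K] {m : ℕ} (T : Fin m → K) : Set (ℕ × List (PatternCoding m ℕ)) :=
  {q | ¬ ∃ x : K → ℕ, (∀ g, x g < q.1) ∧ x ∈ XC T {c | c ∈ q.2}}

/-- The origin constrained domino problem of `(K,T)`: triples `((N,a),F)` such that no
configuration with symbols `< N` and the symbol `a` at the origin avoids `F`. -/
def OCDP {K : Type} [Group K] {m : ℕ} (T : Fin m → K) :
    Set ((ℕ × ℕ) × List (PatternCoding m ℕ)) :=
  {q | ¬ ∃ x : K → ℕ, (∀ g, x g < q.1.1) ∧ x 1 = q.1.2 ∧ x ∈ XC T {c | c ∈ q.2}}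

/-! ### Auxiliary: relativized computability from plain computability -/

theorem NatPartrecIn.of_natPartrec {O : ℕ →. ℕ} {f : ℕ →. ℕ} (h : Nat.Partrec f) :
    NatPartrecIn O f := by
  induction h with
  | zero => exact .zero
  | succ => exact .succ
  | left => exact .left
  | right => exact .right
  | pair _ _ ihf ihg => exact .pair ihf ihg
  | comp _ _ ihf ihg => exact .comp ihf ihg
  | prec _ _ ihf ihg => exact .prec ihf ihg
  | rfind _ ihf => exact .rfind ihf

theorem RePredIn.of_rePred {O : ℕ →. ℕ} {α : Type} [Primcodable α] {p : α → Prop}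
    (h : REPred p) : RePredIn O p :=
  NatPartrecIn.of_natPartrec h

/-! ### Auxiliary: words -/

variable {G : Type} [Group G]

theorem wordEval_append {k : ℕ} (S : Fin k → G) (w v : List (Fin k)) :
    wordEval S (w ++ v) = wordEval S w * wordEval S v := by
  simp [wordEval]

theorem wordEval_nil {k : ℕ} (S : Fin k → G) : wordEval S [] = 1 := rfl

theorem wordEval_surjective {k : ℕ} {S : Fin k → G} (hS : IsGenData S) :
    Function.Surjective (wordEval S) := by
  have hinv : ∀ w : List (Fin k), ∃ v : List (Fin k), wordEval S v = (wordEval S w)⁻¹ := by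
    intro w
    induction w with
    | nil => exact ⟨[], by simp [wordEval]⟩
    | cons i w ih =>
      obtain ⟨v, hv⟩ := ih
      obtain ⟨j, hj⟩ := hS.2.1 i
      refine ⟨v ++ [j], ?_⟩
      rw [wordEval_append, hv]
      simp [wordEval, hj, mul_inv_rev]
  let H : Subgroup G :=
    { carrier := Set.range (wordEval S)
      one_mem' := ⟨[], rfl⟩
      mul_mem' := by
        rintro a b ⟨w, rfl⟩ ⟨v, rfl⟩
        exact ⟨w ++ v, wordEval_append S w v⟩
      inv_mem' := by
        rintro a ⟨w, rfl⟩
        exact hinv w }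
  intro g
  have htop : Subgroup.closure (Set.range S) ≤ H := by
    rw [Subgroup.closure_le]
    rintro a ⟨i, rfl⟩
    exact ⟨[i], by simp [wordEval]⟩
  have : g ∈ H := by
    have := hS.2.2 ▸ htop
    exact this (hS.2.2 ▸ Subgroup.mem_top g)
  exact this
/-! ### The coherence subshift -/

/-- The coherent subshift: all positions marked `2` see the same configuration. -/
def Xcoh (G : Type) [Group G] : Set (G → Fin 3) :=
  {x | ∀ g g' h : G, x g = 2 → x g' = 2 → x (g * h) = x (g' * h)}

theorem isSubshift_Xcoh : IsSubshift (Xcoh G) := by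
  constructor
  · letI : TopologicalSpace (Fin 3) := ⊥
    haveI : DiscreteTopology (Fin 3) := discreteTopology_bot _
    rw [← isOpen_compl_iff, isOpen_iff_mem_nhds]
    intro x hx
    simp only [Xcoh, Set.mem_compl_iff, Set.mem_setOf_eq, not_forall] at hx
    obtain ⟨g, g', h, h2, h2', hne⟩ := hx
    have hev : ∀ (a : G) (c : Fin 3), IsOpen {y : G → Fin 3 | y a = c} := by
      intro a c
      have : {y : G → Fin 3 | y a = c} = (fun y : G → Fin 3 => y a) ⁻¹' {c} := rfl
      rw [this]
      exact (continuous_apply a).isOpen_preimage _ (isOpen_discrete _)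
    have hU : IsOpen {y : G → Fin 3 | y g = x g ∧ y g' = x g' ∧ y (g * h) = x (g * h) ∧
        y (g' * h) = x (g' * h)} := by
      have heq : {y : G → Fin 3 | y g = x g ∧ y g' = x g' ∧ y (g * h) = x (g * h) ∧
          y (g' * h) = x (g' * h)} = {y : G → Fin 3 | y g = x g} ∩ ({y | y g' = x g'} ∩
          ({y | y (g * h) = x (g * h)} ∩ {y | y (g' * h) = x (g' * h)})) := by
        ext y; simp [Set.mem_inter_iff, and_assoc]
      rw [heq]
      exact (hev g _).inter ((hev g' _).inter ((hev (g*h) _).inter (hev (g'*h) _)))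
    refine Filter.mem_of_superset (hU.mem_nhds ⟨rfl, rfl, rfl, rfl⟩) ?_
    rintro y ⟨e1, e2, e3, e4⟩
    simp only [Set.mem_compl_iff, Xcoh, Set.mem_setOf_eq, not_forall]
    exact ⟨g, g', h, e1.trans h2, e2.trans h2', by rw [e3, e4]; exact hne⟩
  · intro x hx g₀ g g' h h2 h2'
    have := hx (g₀⁻¹ * g) (g₀⁻¹ * g') h h2 h2'
    simpa [mul_assoc] using this

/-- The set of pattern codings defining the coherent subshift. -/
def Ccoh (k : ℕ) : Set (PatternCoding k (Fin 3)) :=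
  {c | ∃ (w v : List (Fin k)) (a b : Fin 3),
    c = [([], 2), (w, 2), (v, a), (w ++ v, b)] ∧ a ≠ b}

theorem Xcoh_eq_XC {k : ℕ} {S : Fin k → G} (hS : IsGenData S) :
    Xcoh G = XC S (Ccoh k) := by
  ext x
  constructor
  · intro hx hocc
    obtain ⟨g, c, ⟨w, v, a, b, rfl, hab⟩, hmatch⟩ := hocc
    have h0 := hmatch ([], 2) (by simp)
    have h1 := hmatch (w, 2) (by simp)
    have h2 := hmatch (v, a) (by simp)
    have h3 := hmatch (w ++ v, b) (by simp)
    simp only [wordEval_nil, mul_one] at h0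
    rw [wordEval_append] at h3
    have := hx g (g * wordEval S w) (wordEval S v) h0 h1
    rw [h2, mul_assoc, h3] at this
    exact hab this
  · intro hx g g' h h2 h2'
    by_contra hne
    obtain ⟨w, hw⟩ := wordEval_surjective hS (g⁻¹ * g')
    obtain ⟨v, hv⟩ := wordEval_surjective hS h
    refine hx ⟨g, [([], 2), (w, 2), (v, x (g * h)), (w ++ v, x (g' * h))],
      ⟨w, v, _, _, rfl, hne⟩, ?_⟩
    intro p hp
    simp only [List.mem_cons, List.not_mem_nil, or_false] at hp
    rcases hp with rfl | rfl | rfl | rfl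
    · simp [wordEval_nil, h2]
    · simp [hw, h2']
    · simp [hv]
    · simp [wordEval_append, hw, hv, ← mul_assoc]
/-! ### Computability of the coding set -/

/-- Boolean recognizer for `Ccoh`. -/
def ccohBool (k : ℕ) (c : PatternCoding k (Fin 3)) : Bool :=
  (decide ((getElem? c 0) = some ([], 2))) &&
  ((decide (((getElem? c 1)).map Prod.snd = some (2 : Fin 3))) &&
  ((decide (((getElem? c 3)).map Prod.fst =
      (((getElem? c 1)).bind fun p1 => ((getElem? c 2)).map fun p2 => p1.1 ++ p2.1))) &&
  ((!decide (((getElem? c 2)).map Prod.snd = ((getElem? c 3)).map Prod.snd)) &&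
  (decide (c.length = 4)))))

theorem ccohBool_iff (k : ℕ) (c : PatternCoding k (Fin 3)) :
    ccohBool k c = true ↔ c ∈ Ccoh k := by
  constructor
  · intro hc
    simp only [ccohBool, Bool.and_eq_true, decide_eq_true_eq, Bool.not_eq_true',
      decide_eq_false_iff_not] at hc
    obtain ⟨h0, h1, h2, h3, h4⟩ := hc
    match c, h4 with
    | [p0, p1, p2, p3], _ =>
      simp only [List.getElem?_cons_zero, List.getElem?_cons_succ] at h0 h1 h2 h3
      refine ⟨p1.1, p2.1, p2.2, p3.2, ?_, ?_⟩
      · simp only [Option.map_some, Option.bind_some] at h0 h1 h2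
        have hp0 : p0 = ([], 2) := by injection h0
        have hp1 : p1 = (p1.1, 2) := by
          have : p1.2 = 2 := by injection h1
          exact Prod.ext rfl this
        have hp3 : p3 = (p1.1 ++ p2.1, p3.2) := by
          have : p3.1 = p1.1 ++ p2.1 := by injection h2
          exact Prod.ext this rfl
        simp only [List.cons.injEq, and_true, true_and]
        exact ⟨hp0, hp1, hp3⟩
      · intro hab
        apply h3
        simp only [Option.map_some]
        rw [hab]
  · rintro ⟨w, v, a, b, rfl, hab⟩
    simp only [ccohBool, List.getElem?_cons_zero, List.getElem?_cons_succ, Option.map_some, Option.bind_some, List.length,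
      Bool.and_eq_true, decide_eq_true_eq, Bool.not_eq_true', decide_eq_false_iff_not]
    simpa using hab

theorem rePred_Ccoh (k : ℕ) : REPred (· ∈ Ccoh k) := by
  apply ComputablePred.to_re
  rw [ComputablePred.computable_iff]
  refine ⟨ccohBool k, ?_, ?_⟩
  · -- Primrec hence computable
    apply Primrec.to_comp
    have hget : ∀ i : ℕ, Primrec fun c : PatternCoding k (Fin 3) => (getElem? c i) := fun i =>
      Primrec.list_getElem?.comp .id (.const i)
    have b0 : Primrec fun c : PatternCoding k (Fin 3) =>
        decide ((getElem? c 0) = some ([], 2)) :=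
      (Primrec.eq.comp (hget 0) (.const _)).decide
    have m1 : Primrec fun c : PatternCoding k (Fin 3) => ((getElem? c 1)).map Prod.snd :=
      Primrec.option_map (hget 1) (Primrec.snd.comp Primrec.snd).to₂
    have b1 : Primrec fun c : PatternCoding k (Fin 3) =>
        decide (((getElem? c 1)).map Prod.snd = some (2 : Fin 3)) :=
      (Primrec.eq.comp m1 (.const _)).decide
    have m3f : Primrec fun c : PatternCoding k (Fin 3) => ((getElem? c 3)).map Prod.fst :=
      Primrec.option_map (hget 3) (Primrec.fst.comp Primrec.snd).to₂
    have minner : Primrec fun c : PatternCoding k (Fin 3) =>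
        ((getElem? c 1)).bind fun p1 => ((getElem? c 2)).map fun p2 => p1.1 ++ p2.1 := by
      apply Primrec.option_bind (hget 1)
      apply Primrec.option_map ((hget 2).comp Primrec.fst)
      exact (Primrec.list_append.comp
        (Primrec.fst.comp (Primrec.snd.comp Primrec.fst))
        (Primrec.fst.comp Primrec.snd)).to₂
    have b2 : Primrec fun c : PatternCoding k (Fin 3) =>
        decide (((getElem? c 3)).map Prod.fst =
          (((getElem? c 1)).bind fun p1 => ((getElem? c 2)).map fun p2 => p1.1 ++ p2.1)) :=
      (Primrec.eq.comp m3f minner).decide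
    have m2s : Primrec fun c : PatternCoding k (Fin 3) => ((getElem? c 2)).map Prod.snd :=
      Primrec.option_map (hget 2) (Primrec.snd.comp Primrec.snd).to₂
    have m3s : Primrec fun c : PatternCoding k (Fin 3) => ((getElem? c 3)).map Prod.snd :=
      Primrec.option_map (hget 3) (Primrec.snd.comp Primrec.snd).to₂
    have b3 : Primrec fun c : PatternCoding k (Fin 3) =>
        !decide (((getElem? c 2)).map Prod.snd = ((getElem? c 3)).map Prod.snd) :=
      Primrec.not.comp (Primrec.eq.comp m2s m3s).decide
    have b4 : Primrec fun c : PatternCoding k (Fin 3) => decide (c.length = 4) :=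
      (Primrec.eq.comp (Primrec.list_length.comp .id) (.const _)).decide
    have hand : ∀ (f g : PatternCoding k (Fin 3) → Bool), Primrec f → Primrec g →
        Primrec fun c => f c && g c := by
      intro f g hf hg
      have heq : (fun c => f c && g c) = fun c => bif f c then g c else false :=
        funext fun c => by cases f c <;> rfl
      rw [heq]
      exact Primrec.cond hf hg (Primrec.const false)
    exact hand _ _ b0 (hand _ _ b1 (hand _ _ b2 (hand _ _ b3 b4)))
  · funext c
    exact propext (ccohBool_iff k c).symm
/-! ### Group-theoretic dichotomy -/

/-- A finitely generated commutative torsion group is finite. -/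
theorem finite_of_comm_torsion_fg (A : Type) [Group A] (hcomm : ∀ a b : A, a * b = b * a)
    (htor : ∀ a : A, IsOfFinOrder a) (hfg : Group.FG A) : Finite A := by
  haveI hnorm : ∀ N : Subgroup A, N.Normal := fun N =>
    ⟨fun n hn g => by rw [hcomm g n, mul_assoc, mul_inv_cancel, mul_one]; exact hn⟩
  have key : ∀ X : Finset A, ((Subgroup.closure (X : Set A) : Subgroup A) : Set A).Finite := by
    intro X
    induction X using Finset.induction with
    | empty =>
      rw [Finset.coe_empty, Subgroup.closure_empty, Subgroup.coe_bot]
      exact Set.finite_singleton 1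
    | @insert a X ha ih =>
      have : ((insert a X : Finset A) : Set A) = {a} ∪ (X : Set A) := by
        rw [Finset.coe_insert]; exact Set.insert_eq _ _
      rw [this, Subgroup.closure_union, ← Subgroup.zpowers_eq_closure,
        Subgroup.mul_normal (Subgroup.zpowers a) (Subgroup.closure (X : Set A))]
      exact Set.Finite.mul ((htor a).finite_zpowers) ih
  obtain ⟨Sset, hScl, hSfin⟩ := Group.fg_iff.mp hfg
  have := key hSfin.toFinset
  rw [hSfin.coe_toFinset, hScl] at this
  have : (Set.univ : Set A).Finite := by simpa using this
  exact Set.finite_univ_iff.mp this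

theorem exists_marker_subgroup {G : Type} [Group G] [Infinite G] {k : ℕ} (S : Fin k → G)
    (hgen : Subgroup.closure (Set.range S) = ⊤) :
    ∃ q₀ : ℕ, 0 < q₀ ∧ ∀ E : Finset G, ∃ (T : Subgroup G) (t : G), t ∈ T ∧ t ∉ E ∧
      ∃ Q : Finset G, (∀ x : G, x ∈ T → x ∈ E → x ∈ Q) ∧ Q.card ≤ q₀ := by
  by_cases hinf : ∃ t : G, ¬ IsOfFinOrder t
  · -- there is an element of infinite order
    obtain ⟨t, ht⟩ := hinf
    refine ⟨1, one_pos, fun E => ?_⟩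
    have hzinj : Function.Injective fun n : ℤ => t ^ n :=
      injective_zpow_iff_not_isOfFinOrder.mpr ht
    have hJ : {n : ℤ | t ^ n ∈ (E : Set G)}.Finite :=
      Set.Finite.preimage hzinj.injOn E.finite_toSet
    obtain ⟨M, hM⟩ : ∃ M : ℕ, ∀ n : ℤ, t ^ n ∈ (E : Set G) → n.natAbs ≤ M := by
      obtain ⟨M, hM⟩ := (hJ.image Int.natAbs).bddAbove
      exact ⟨M, fun n hn => hM ⟨n, hn, rfl⟩⟩
    set N : ℤ := (M : ℤ) + 1 with hN
    refine ⟨Subgroup.zpowers (t ^ N), t ^ N, Subgroup.mem_zpowers _, ?_, {1}, ?_, le_rfl⟩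
    · intro hmem
      have := hM N hmem
      omega
    · intro x hx hxE
      obtain ⟨j, rfl⟩ := hx
      have hxE' : (t ^ N) ^ j ∈ (E : Set G) := hxE
      rw [← zpow_mul] at hxE'
      have hj := hM (N * j) hxE'
      rw [Int.natAbs_mul] at hj
      have hNabs : N.natAbs = M + 1 := by omega
      rw [hNabs] at hj
      have hj0 : j = 0 := by
        rcases Nat.eq_zero_or_pos j.natAbs with h0 | hpos
        · exact Int.natAbs_eq_zero.mp h0
        · nlinarith [hj, hpos]
      simp [hj0]
  · -- torsion case
    push_neg at hinf
    -- first: there is an element with infinite conjugacy class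
    have hcls : ∃ t₀ : G, {x : G | ∃ s : G, s * t₀ * s⁻¹ = x}.Infinite := by
      by_contra hconj
      push_neg at hconj
      -- all conjugacy classes are finite: G is finite, contradiction
      set C : Fin k → Subgroup G := fun i => Subgroup.centralizer {S i} with hC
      have hfinq : ∀ i : Fin k, Finite (G ⧸ C i) := by
        intro i
        have hwd : ∀ a b : G, (QuotientGroup.leftRel (C i)) a b →
            a * S i * a⁻¹ = b * S i * b⁻¹ := by
          intro a b hab
          rw [QuotientGroup.leftRel_apply] at hab
          have hcomm := Subgroup.mem_centralizer_iff.mp hab (S i) rfl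
          -- hcomm : S i * (a⁻¹ * b) = (a⁻¹ * b) * S i
          have : a * (S i * (a⁻¹ * b)) * b⁻¹ = a * ((a⁻¹ * b) * S i) * b⁻¹ := by rw [hcomm]
          calc a * S i * a⁻¹ = a * (S i * (a⁻¹ * b)) * b⁻¹ := by group
            _ = a * ((a⁻¹ * b) * S i) * b⁻¹ := this
            _ = b * S i * b⁻¹ := by group
        let f : G ⧸ C i → G := fun q => Quotient.liftOn' q (fun s => s * S i * s⁻¹) hwd
        have hfinj : Function.Injective f := by
          intro q1 q2
          induction q1 using Quotient.inductionOn'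
          induction q2 using Quotient.inductionOn'
          rename_i a b
          intro hab
          have hab' : a * S i * a⁻¹ = b * S i * b⁻¹ := hab
          apply Quotient.sound'
          rw [QuotientGroup.leftRel_apply]
          rw [Subgroup.mem_centralizer_iff]
          intro h hh
          rw [Set.mem_singleton_iff] at hh
          subst hh
          have hkey : a⁻¹ * (a * S i * a⁻¹) * b = a⁻¹ * (b * S i * b⁻¹) * b := by rw [hab']
          calc S i * (a⁻¹ * b) = a⁻¹ * (a * S i * a⁻¹) * b := by group
            _ = a⁻¹ * (b * S i * b⁻¹) * b := hkey
            _ = (a⁻¹ * b) * S i := by group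
        have hsub : Finite ↥{x : G | ∃ s : G, s * S i * s⁻¹ = x} :=
          (hconj (S i)).to_subtype
        have : ∀ q : G ⧸ C i, f q ∈ {x : G | ∃ s : G, s * S i * s⁻¹ = x} := by
          intro q
          induction q using Quotient.inductionOn'
          rename_i a
          exact ⟨a, rfl⟩
        exact Finite.of_injective (fun q => (⟨f q, this q⟩ : ↥{x : G | ∃ s : G, s * S i * s⁻¹ = x}))
          fun q1 q2 h => hfinj (congrArg Subtype.val h)
      haveI := fun i => hfinq i
      set Z : Subgroup G := ⨅ i, C i with hZ
      haveI hfinZq : Finite (G ⧸ Z) := by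
        haveI : ∀ i, Finite (G ⧸ C i) := hfinq
        exact Finite.of_injective _ (Subgroup.quotientiInfEmbedding C).injective
      -- every element of Z is central
      have hcentral : ∀ z ∈ Z, ∀ g : G, g * z = z * g := by
        intro z hz g
        have hg : g ∈ Subgroup.closure (Set.range S) := hgen ▸ Subgroup.mem_top g
        induction hg using Subgroup.closure_induction with
        | mem x hx =>
          obtain ⟨i, rfl⟩ := hx
          have : z ∈ C i := (Subgroup.mem_iInf.mp hz) i
          exact Subgroup.mem_centralizer_iff.mp this (S i) rfl
        | one => simp
        | mul x y hx hy ihx ihy => rw [mul_assoc, ihy, ← mul_assoc, ihx, mul_assoc]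
        | inv x hx ihx =>
          calc x⁻¹ * z = x⁻¹ * z * x * x⁻¹ := by group
            _ = x⁻¹ * (x * z) * x⁻¹ := by rw [mul_assoc x⁻¹ z x, ← ihx]
            _ = z * x⁻¹ := by group
      -- Z is a commutative finitely generated torsion group, hence finite
      have hcommZ : ∀ a b : ↥Z, a * b = b * a := by
        intro a b
        apply Subtype.ext
        rw [Subgroup.coe_mul, Subgroup.coe_mul]
        exact hcentral b.1 b.2 a.1
      haveI hZfi : Z.FiniteIndex := ⟨Subgroup.index_ne_zero_of_finite⟩
      haveI hGfg : Group.FG G :=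
        Group.fg_iff.mpr ⟨Set.range S, hgen, Set.finite_range S⟩
      have hZfg : Group.FG ↥Z := Subgroup.fg_of_index_ne_zero Z
      have hZtor : ∀ a : ↥Z, IsOfFinOrder a := by
        intro a
        have h1 : orderOf (Z.subtype a) = orderOf a :=
          orderOf_injective Z.subtype Z.subtype_injective a
        by_contra hcon
        exact (orderOf_eq_zero_iff.mp (h1.trans (orderOf_eq_zero_iff.mpr hcon))) (hinf _)
      haveI hZfin : Finite ↥Z := finite_of_comm_torsion_fg ↥Z hcommZ hZtor hZfg
      haveI : Finite ((G ⧸ Z) × ↥Z) := inferInstance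
      haveI : Finite G := Finite.of_equiv _ (Subgroup.groupEquivQuotientProdSubgroup (s := Z)).symm
      exact not_finite G
    obtain ⟨t₀, ht₀⟩ := hcls
    refine ⟨orderOf t₀, (hinf t₀).orderOf_pos, fun E => ?_⟩
    obtain ⟨t, ⟨s, rfl⟩, htE⟩ := Set.Infinite.exists_notMem_finset ht₀ E
    have hord : orderOf (s * t₀ * s⁻¹) = orderOf t₀ := by
      have := orderOf_injective (MulAut.conj s).toMonoidHom (MulEquiv.injective _) t₀
      simpa [MulAut.conj_apply] using this
    set t := s * t₀ * s⁻¹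
    have htfin : IsOfFinOrder t := hinf t
    refine ⟨Subgroup.zpowers t, t, Subgroup.mem_zpowers _, htE, htfin.finite_zpowers.toFinset,
      ?_, ?_⟩
    · intro x hx hxE
      rw [Set.Finite.mem_toFinset]
      exact hx
    · haveI : Fintype ↥((Subgroup.zpowers t : Subgroup G) : Set G) :=
        htfin.finite_zpowers.fintype
      have h1 : htfin.finite_zpowers.toFinset.card = Nat.card ↥(Subgroup.zpowers t) := by
        rw [Set.Finite.card_toFinset]
        exact (Nat.card_eq_fintype_card).symm
      rw [h1, Nat.card_zpowers, hord]
/-! ### Window and gluing lemmas -/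

open scoped Pointwise

theorem exists_window {B : Type} [Fintype B] {Y : Set (G → B)}
    (hclosed : letI : TopologicalSpace B := ⊥; IsClosed Y)
    (phi : (G → B) → (G → Fin 3))
    (hcont : letI : TopologicalSpace B := ⊥
             letI : TopologicalSpace (Fin 3) := ⊥
             ContinuousOn phi Y) :
    ∃ W : Finset G, (1:G) ∈ W ∧
      ∀ y ∈ Y, ∀ y' ∈ Y, (∀ v ∈ W, y v = y' v) → phi y 1 = phi y' 1 := by
  letI : TopologicalSpace B := ⊥
  letI : TopologicalSpace (Fin 3) := ⊥
  haveI : DiscreteTopology B := discreteTopology_bot B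
  haveI : DiscreteTopology (Fin 3) := discreteTopology_bot (Fin 3)
  letI : DecidableEq G := Classical.decEq G
  haveI : CompactSpace B := Finite.compactSpace
  haveI : CompactSpace (G → B) := Pi.compactSpace
  have hYcomp : IsCompact Y := hclosed.isCompact
  set c : (G → B) → Fin 3 := fun y => phi y 1 with hcdef
  have hc : ContinuousOn c Y := (continuous_apply (1:G)).comp_continuousOn hcont
  have hbase : ∀ y ∈ Y, ∃ I : Finset G,
      ∀ z ∈ Y, (∀ g ∈ I, z g = y g) → c z = c y := by
    intro y hy
    have hnhd : c ⁻¹' {c y} ∈ nhdsWithin y Y :=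
      (hc y hy) ((isOpen_discrete ({c y} : Set (Fin 3))).mem_nhds rfl)
    rw [mem_nhdsWithin] at hnhd
    obtain ⟨U, hUopen, hyU, hUsub⟩ := hnhd
    obtain ⟨I, u, hu, hpi⟩ := isOpen_pi_iff.mp hUopen y hyU
    refine ⟨I, fun z hz hagree => ?_⟩
    have hzU : z ∈ U := by
      apply hpi
      rw [Set.mem_pi]
      intro i hi
      rw [hagree i (Finset.mem_coe.mp hi)]
      exact (hu i (Finset.mem_coe.mp hi)).2
    exact hUsub ⟨hzU, hz⟩
  set I : (G → B) → Finset G := fun y =>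
    if h : ∃ I : Finset G, ∀ z ∈ Y, (∀ g ∈ I, z g = y g) → c z = c y
    then h.choose else ∅ with hIdef
  have hI : ∀ y ∈ Y, ∀ z ∈ Y, (∀ g ∈ I y, z g = y g) → c z = c y := by
    intro y hy
    have h := hbase y hy
    simp only [hIdef, dif_pos h]
    exact h.choose_spec
  set Cyl : (G → B) → Set (G → B) := fun y => {z | ∀ g ∈ I y, z g = y g} with hCyl
  have hCylOpen : ∀ y, IsOpen (Cyl y) := by
    intro y
    have : Cyl y = ⋂ g ∈ (I y : Set G), {z : G → B | z g = y g} := by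
      ext z; simp [hCyl]
    rw [this]
    refine (I y : Set G).toFinite.isOpen_biInter fun g _ => ?_
    have : {z : G → B | z g = y g} = (fun z : G → B => z g) ⁻¹' {y g} := rfl
    rw [this]
    exact (continuous_apply g).isOpen_preimage _ (isOpen_discrete _)
  have hcover : Y ⊆ ⋃ y ∈ Y, Cyl y := by
    intro y hy
    exact Set.mem_biUnion hy (fun g _ => rfl)
  obtain ⟨Yc, hYcsub, hYcfin, hYccover⟩ :=
    hYcomp.elim_finite_subcover_image (fun y _ => hCylOpen y) hcover
  refine ⟨insert 1 (hYcfin.toFinset.biUnion I), Finset.mem_insert_self 1 _, ?_⟩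
  intro y hy y' hy' hagree
  obtain ⟨y₀, hy₀, hyCyl⟩ := Set.mem_iUnion₂.mp (hYccover hy)
  have hy₀Y : y₀ ∈ Y := hYcsub hy₀
  have hIsub : ∀ g ∈ I y₀, g ∈ insert 1 (hYcfin.toFinset.biUnion I) := by
    intro g hg
    exact Finset.mem_insert_of_mem (Finset.mem_biUnion.mpr ⟨y₀, hYcfin.mem_toFinset.mpr hy₀, hg⟩)
  have h1 : c y = c y₀ := hI y₀ hy₀Y y hy hyCyl
  have h2 : c y' = c y₀ := by
    apply hI y₀ hy₀Y y' hy'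
    intro g hg
    rw [← hagree g (hIsub g hg)]
    exact hyCyl g hg
  exact h1.trans h2.symm

theorem sft_glue {B : Type} [DecidableEq G] {Y : Set (G → B)} {Fs : Set (Pattern G B)}
    (hY : Y = XPat Fs) (P : Finset G) (hP : ∀ p ∈ Fs, ∀ g ∈ p.supp, g ∈ P)
    {y y' : G → B} (hy : y ∈ Y) (hy' : y' ∈ Y) (D : Finset G)
    (hagree : ∀ a ∈ D, (∃ p ∈ P⁻¹ * P, a * p ∉ D) → y a = y' a) :
    (fun h => if h ∈ D then y h else y' h) ∈ Y := by
  subst hY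
  set z : G → B := fun h => if h ∈ D then y h else y' h with hz
  intro hocc
  obtain ⟨g, p, hpFs, hoccp⟩ := hocc
  by_cases hall : ∀ h ∈ p.supp, g * h ∈ D
  · refine hy ⟨g, p, hpFs, ?_⟩
    intro h hh
    rw [← hoccp h hh, hz]
    simp [hall h hh]
  · push_neg at hall
    obtain ⟨h₂, hh₂, hh₂D⟩ := hall
    refine hy' ⟨g, p, hpFs, ?_⟩
    intro h hh
    rw [← hoccp h hh, hz]
    by_cases hD : g * h ∈ D
    · simp only [hD, if_true]
      refine (hagree _ hD ⟨h⁻¹ * h₂, Finset.mul_mem_mul (Finset.inv_mem_inv (hP p hpFs h hh))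
        (hP p hpFs h₂ hh₂), ?_⟩).symm
      rw [← mul_assoc, mul_assoc g h h⁻¹, mul_inv_cancel, mul_one]
      exact hh₂D
    · simp [hD]
/-! ### Non-soficity of the coherent subshift -/

theorem not_isSofic_Xcoh [Infinite G] {k : ℕ} (S : Fin k → G)
    (hgen : Subgroup.closure (Set.range S) = ⊤) (ham : FolnerAmenable G) :
    ¬ IsSofic (Xcoh G) := by
  letI : DecidableEq G := Classical.decEq G
  rintro ⟨V⟩
  haveI := V.finB
  obtain ⟨W, hW1, hW⟩ := exists_window V.subY.1 V.phi V.cont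
  obtain ⟨Fs, hFsfin, hYpat⟩ := V.sft
  set Pb : Finset G := insert 1 (hFsfin.toFinset.biUnion (fun p => p.supp)) with hPbdef
  have hPsupp : ∀ p ∈ Fs, ∀ g ∈ p.supp, g ∈ Pb := fun p hp g hg =>
    Finset.mem_insert_of_mem (Finset.mem_biUnion.mpr ⟨p, hFsfin.mem_toFinset.mpr hp, hg⟩)
  set P' : Finset G := Pb⁻¹ * Pb with hP'def
  have h1Pb : (1:G) ∈ Pb := Finset.mem_insert_self 1 _
  have h1P' : (1:G) ∈ P' := by
    have h := Finset.mul_mem_mul (Finset.inv_mem_inv h1Pb) h1Pb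
    rw [inv_one, one_mul] at h
    exact h
  obtain ⟨q₀, hq₀, hmark⟩ := exists_marker_subgroup S hgen
  set nB := Fintype.card V.B with hnB
  set cc : ℕ := 2 * q₀ * nB * W.card * P'.card + 1 with hcc
  have hccpos : (0:ℝ) < cc := by positivity
  obtain ⟨Z₀, hZ₀card⟩ := Finset.exists_card_eq (α := G) ((2*q₀)^2)
  set K₀ : Finset G := (W ×ˢ P').image (fun vp => vp.1 * vp.2⁻¹ * vp.1⁻¹) ∪ Z₀ with hK₀def
  have hεpos : (0:ℝ) < 1 / cc := by positivity
  obtain ⟨F, hFne, hFol⟩ := ham K₀ (1/cc) hεpos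
  obtain ⟨f₀, hf₀⟩ := hFne
  set F₁ : Finset G := F.image (fun x => f₀⁻¹ * x) with hF₁def
  have hmulinj : Function.Injective (fun x : G => f₀⁻¹ * x) := mul_right_injective f₀⁻¹
  have h1F₁ : (1:G) ∈ F₁ :=
    Finset.mem_image.mpr ⟨f₀, hf₀, inv_mul_cancel f₀⟩
  have hF₁ne : F₁.Nonempty := ⟨1, h1F₁⟩
  have hF₁pos : (0:ℝ) < F₁.card := by
    exact_mod_cast Finset.card_pos.mpr hF₁ne
  have hF₁card : F₁.card = F.card := Finset.card_image_of_injective F hmulinj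
  have hFol₁ : ∀ kk ∈ K₀,
      ((F₁ \ F₁.image (fun x => x * kk)).card : ℝ) < (1/cc) * F₁.card := by
    intro kk hkk
    have himg : F₁.image (fun x => x * kk) = (F.image (fun x => x * kk)).image
        (fun x => f₀⁻¹ * x) := by
      rw [hF₁def, Finset.image_image, Finset.image_image]
      apply Finset.image_congr
      intro x _
      simp [mul_assoc]
    have hsd : F₁ \ F₁.image (fun x => x * kk) =
        (F \ F.image (fun x => x * kk)).image (fun x => f₀⁻¹ * x) := by
      rw [hF₁def, himg, Finset.image_sdiff _ _ hmulinj]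
    rw [hsd, Finset.card_image_of_injective _ hmulinj, hF₁card]
    exact hFol kk hkk
  have hFbig : 2*q₀ ≤ F₁.card := by
    have hsub : Z₀ ⊆ F₁⁻¹ * F₁ := by
      intro kk hkk
      have hkk' : kk ∈ K₀ := Finset.mem_union_right _ hkk
      have hlt := hFol₁ kk hkk'
      have hne : (F₁ ∩ F₁.image (fun x => x * kk)).Nonempty := by
        by_contra hcon
        rw [Finset.not_nonempty_iff_eq_empty] at hcon
        have : F₁ \ F₁.image (fun x => x * kk) = F₁ := by
          rwa [Finset.sdiff_eq_self_iff_disjoint, Finset.disjoint_iff_inter_eq_empty]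
        rw [this] at hlt
        have hle : (1:ℝ)/cc ≤ 1 := by
          rw [div_le_one hccpos]
          exact_mod_cast Nat.le_add_left 1 _
        nlinarith
      obtain ⟨a, ha⟩ := hne
      obtain ⟨ha1, ha2⟩ := Finset.mem_inter.mp ha
      obtain ⟨x, hx, rfl⟩ := Finset.mem_image.mp ha2
      have : kk = x⁻¹ * (x * kk) := by group
      rw [this]
      exact Finset.mul_mem_mul (Finset.inv_mem_inv hx) ha1
    have h2 : (2*q₀)^2 ≤ F₁.card^2 := by
      calc (2*q₀)^2 = Z₀.card := hZ₀card.symm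
        _ ≤ (F₁⁻¹ * F₁).card := Finset.card_le_card hsub
        _ ≤ F₁⁻¹.card * F₁.card := Finset.card_mul_le
        _ = F₁.card^2 := by rw [Finset.card_inv]; ring
    exact (Nat.pow_le_pow_iff_left (two_ne_zero)).mp h2
  set D : Finset G := F₁ * W with hDdef
  set E : Finset G := D * W⁻¹ * F₁⁻¹ ∪ F₁ * F₁⁻¹ with hEdef
  obtain ⟨T, t, htT, htE, Q, hQ, hQcard⟩ := hmark E
  set qm : G → Quotient (QuotientGroup.rightRel T) := Quotient.mk'' with hqmdef
  have hqm : ∀ a b : G, qm a = qm b ↔ b * a⁻¹ ∈ T := by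
    intro a b
    rw [hqmdef, Quotient.eq'']
    exact QuotientGroup.rightRel_apply
  have hfib : ∀ v, (F₁.filter fun r => qm r = v).card ≤ q₀ := by
    intro v
    rcases (F₁.filter fun r => qm r = v).eq_empty_or_nonempty with he | hne
    · rw [he]; simp [Nat.zero_le]
    · obtain ⟨a₀, ha₀⟩ := hne
      have ha₀F : a₀ ∈ F₁ := (Finset.mem_filter.mp ha₀).1
      have ha₀q : qm a₀ = v := (Finset.mem_filter.mp ha₀).2
      refine le_trans (Finset.card_le_card_of_injOn (fun r => r * a₀⁻¹) ?_ ?_) hQcard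
      · intro r hr
        obtain ⟨hrF, hrq⟩ := Finset.mem_filter.mp hr
        refine hQ _ ((hqm a₀ r).mp (by rw [hrq, ha₀q])) ?_
        exact Finset.mem_union_right _ (Finset.mul_mem_mul hrF (Finset.inv_mem_inv ha₀F))
      · intro x _ y _ hxy
        exact mul_left_injective a₀⁻¹ hxy
  set Vq := F₁.image qm with hVqdef
  have hVq : F₁.card ≤ q₀ * Vq.card :=
    Finset.card_le_mul_card_image F₁ q₀ (fun b _ => hfib b)
  set pick : Quotient (QuotientGroup.rightRel T) → G := fun v =>
    if h : ∃ r, r ∈ F₁ ∧ qm r = v then h.choose else 1 with hpickdef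
  have hpick : ∀ v ∈ Vq, pick v ∈ F₁ ∧ qm (pick v) = v := by
    intro v hv
    obtain ⟨r, hr, hrv⟩ := Finset.mem_image.mp hv
    have h : ∃ r, r ∈ F₁ ∧ qm r = v := ⟨r, hr, hrv⟩
    simp only [hpickdef, dif_pos h]
    exact ⟨h.choose_spec.1, h.choose_spec.2⟩
  set R : Finset G := Vq.image pick with hRdef
  have hRF : R ⊆ F₁ := by
    intro r hr
    obtain ⟨v, hv, rfl⟩ := Finset.mem_image.mp hr
    exact (hpick v hv).1
  have hpickqm : ∀ r ∈ R, pick (qm r) = r := by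
    intro r hr
    obtain ⟨v, hv, rfl⟩ := Finset.mem_image.mp hr
    rw [(hpick v hv).2]
  have hRcard : R.card = Vq.card := by
    rw [hRdef]
    apply Finset.card_image_of_injOn
    intro v₁ h₁ v₂ h₂ hp
    rw [← (hpick v₁ h₁).2, ← (hpick v₂ h₂).2, hp]
  set R' := R.filter (fun r => ¬ (qm r = qm 1)) with hR'def
  have hR'sub : R' ⊆ F₁ := fun r hr => hRF (Finset.filter_subset _ _ hr)
  have hRR' : R.card ≤ R'.card + 1 := by
    have hsplit := Finset.card_filter_add_card_filter_not
      (s := R) (p := fun r => ¬ (qm r = qm 1))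
    have hone : (R.filter (fun r => ¬¬(qm r = qm 1))).card ≤ 1 := by
      apply Finset.card_le_one.mpr
      intro a ha b hb
      obtain ⟨haR, haq⟩ := Finset.mem_filter.mp ha
      obtain ⟨hbR, hbq⟩ := Finset.mem_filter.mp hb
      rw [not_not] at haq hbq
      rw [← hpickqm a haR, ← hpickqm b hbR, haq, hbq]
    rw [hR'def]
    omega
  have huniq : ∀ r₁ ∈ R', ∀ r₂ ∈ R', qm r₁ = qm r₂ → r₁ = r₂ := by
    intro r₁ h1 r₂ h2 hq
    rw [← hpickqm r₁ (Finset.filter_subset _ _ h1), hq,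
      hpickqm r₂ (Finset.filter_subset _ _ h2)]
  -- the configurations
  set val3 : Quotient (QuotientGroup.rightRel T) → (↥R' → Bool) → Fin 3 := fun v w =>
    if v = qm 1 then 2 else
      if h : ∃ r : ↥R', v = qm (r:G) then (if w h.choose then 1 else 0) else 0
    with hval3def
  set xcfg : (↥R' → Bool) → G → Fin 3 := fun w g => val3 (qm g) w with hxcfgdef
  have hval_ne2 : ∀ v w, v ≠ qm 1 → val3 v w ≠ 2 := by
    intro v w hv
    rw [hval3def]
    simp only [if_neg hv]
    split
    · split
      · decide
      · decide
    · decide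
  have hxcfg2 : ∀ w g, xcfg w g = 2 ↔ qm g = qm 1 := by
    intro w g
    constructor
    · intro hx
      by_contra hcon
      exact hval_ne2 (qm g) w hcon hx
    · intro hq
      rw [hxcfgdef]
      simp only [hval3def, if_pos hq]
  have hxcfgXcoh : ∀ w, xcfg w ∈ Xcoh G := by
    intro w g g' h hg hg'
    have h1 : qm g = qm 1 := (hxcfg2 w g).mp hg
    have h2 : qm g' = qm 1 := (hxcfg2 w g').mp hg'
    have hgg' : g' * g⁻¹ ∈ T := (hqm g g').mp (h1.trans h2.symm)
    have hq : qm (g*h) = qm (g'*h) := by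
      rw [hqm]
      have he : (g' * h) * (g*h)⁻¹ = g' * g⁻¹ := by group
      rw [he]
      exact hgg'
    show val3 (qm (g*h)) w = val3 (qm (g'*h)) w
    rw [hq]
  have hxcfg1 : ∀ w, xcfg w 1 = 2 := fun w => (hxcfg2 w 1).mpr rfl
  have hxcfgt : ∀ w g, xcfg w (t * g) = xcfg w g := by
    intro w g
    have hq : qm (t*g) = qm g := by
      rw [hqm]
      have he : g * (t*g)⁻¹ = t⁻¹ := by group
      rw [he]
      exact inv_mem htT
    show val3 (qm (t*g)) w = val3 (qm g) w
    rw [hq]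
  have hxcfgr : ∀ w (r : ↥R'), xcfg w (r : G) = (if w r then 1 else 0) := by
    intro w r
    have hrR' : (r:G) ∈ R' := r.2
    have hrne : ¬ (qm (r:G) = qm 1) := (Finset.mem_filter.mp hrR').2
    have hex : ∃ r' : ↥R', qm (r:G) = qm ((r':G)) := ⟨r, rfl⟩
    show val3 (qm (r:G)) w = _
    rw [hval3def]
    simp only [if_neg hrne, dif_pos hex]
    have : hex.choose = r := by
      apply Subtype.ext
      exact (huniq _ (hex.choose).2 _ r.2 hex.choose_spec.symm)
    rw [this]
  have hmemX : ∀ w, xcfg w ∈ V.phi '' V.Y := by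
    intro w
    rw [V.image]
    exact hxcfgXcoh w
  choose ycfg hycfgY hycfgPhi using fun w => hmemX w
  set Kc : Finset G := D.filter (fun a => ∃ p ∈ P', a * p ∉ D) with hKcdef
  -- numeric bound
  have hKsub : Kc ⊆ (W ×ˢ P').biUnion (fun vp =>
      (F₁.image (fun x => x * vp.1)) \ (F₁.image (fun x => x * (vp.1 * vp.2⁻¹)))) := by
    intro a ha
    obtain ⟨haD, hex⟩ := Finset.mem_filter.mp ha
    obtain ⟨p, hpP', hapD⟩ := hex
    obtain ⟨f, hf, v, hv, rfl⟩ := Finset.mem_mul.mp haD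
    refine Finset.mem_biUnion.mpr ⟨(v, p), Finset.mem_product.mpr ⟨hv, hpP'⟩, ?_⟩
    rw [Finset.mem_sdiff]
    constructor
    · exact Finset.mem_image.mpr ⟨f, hf, rfl⟩
    · intro hmem
      obtain ⟨f', hf', hf'eq⟩ := Finset.mem_image.mp hmem
      apply hapD
      have he : (f*v) * p = f' * v := by rw [← hf'eq]; group
      rw [he]
      exact Finset.mul_mem_mul hf' hv
  have hterm : ∀ vp ∈ W ×ˢ P',
      (((F₁.image (fun x => x * vp.1)) \ (F₁.image (fun x => x * (vp.1 * vp.2⁻¹)))).card : ℝ)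
        < (1/cc) * F₁.card := by
    intro vp hvp
    have hk : vp.1 * vp.2⁻¹ * vp.1⁻¹ ∈ K₀ :=
      Finset.mem_union_left _ (Finset.mem_image.mpr ⟨vp, hvp, rfl⟩)
    have hinj1 : Function.Injective (fun x : G => x * vp.1) := mul_left_injective vp.1
    have hcardeq : ((F₁.image (fun x => x * vp.1)) \
        (F₁.image (fun x => x * (vp.1 * vp.2⁻¹)))).card
        = (F₁ \ F₁.image (fun x => x * (vp.1 * vp.2⁻¹ * vp.1⁻¹))).card := by
      have himg2 : (F₁.image (fun x => x * (vp.1 * vp.2⁻¹ * vp.1⁻¹))).image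
          (fun x => x * vp.1) = F₁.image (fun x => x * (vp.1 * vp.2⁻¹)) := by
        rw [Finset.image_image]
        apply Finset.image_congr
        intro x _
        simp [mul_assoc]
      rw [← himg2, ← Finset.image_sdiff _ _ hinj1,
        Finset.card_image_of_injective _ hinj1]
    rw [hcardeq]
    exact hFol₁ _ hk
  have hKlt : (Kc.card : ℝ) < (W.card * P'.card) * ((1/cc) * F₁.card) := by
    have hprodne : (W ×ˢ P').Nonempty := ⟨(1,1), Finset.mem_product.mpr ⟨hW1, h1P'⟩⟩
    have hb1 : (Kc.card : ℝ) ≤ ∑ vp ∈ W ×ˢ P',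
        (((F₁.image (fun x => x * vp.1)) \
          (F₁.image (fun x => x * (vp.1 * vp.2⁻¹)))).card : ℝ) := by
      have := le_trans (Finset.card_le_card hKsub) (Finset.card_biUnion_le)
      exact_mod_cast this
    have hb2 : ∑ vp ∈ W ×ˢ P',
        (((F₁.image (fun x => x * vp.1)) \
          (F₁.image (fun x => x * (vp.1 * vp.2⁻¹)))).card : ℝ)
        < ∑ _vp ∈ W ×ˢ P', (1/cc : ℝ) * F₁.card :=
      Finset.sum_lt_sum_of_nonempty hprodne hterm
    have hb3 : ∑ _vp ∈ W ×ˢ P', (1/cc : ℝ) * F₁.card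
        = (W.card * P'.card) * ((1/cc) * F₁.card) := by
      rw [Finset.sum_const, Finset.card_product, nsmul_eq_mul]
      push_cast
      ring
    linarith
  have hR'F : (F₁.card : ℝ) ≤ 2*q₀*R'.card := by
    have h1 : F₁.card ≤ q₀ * R'.card + q₀ := by
      calc F₁.card ≤ q₀ * Vq.card := hVq
        _ = q₀ * R.card := by rw [hRcard]
        _ ≤ q₀ * (R'.card + 1) := Nat.mul_le_mul_left _ hRR'
        _ = q₀ * R'.card + q₀ := by ring
    have h2 : F₁.card ≤ 2 * (q₀ * R'.card) := by omega
    have := (Nat.cast_le (α := ℝ)).mpr h2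
    push_cast at this ⊢
    linarith
  have hnum : nB * Kc.card < R'.card := by
    have hq₀R : (0:ℝ) < 2*(q₀:ℝ) := by positivity
    have c1 : ((nB * Kc.card : ℕ) : ℝ) ≤ (nB:ℝ) * ((W.card * P'.card) * ((1/cc)*F₁.card)) := by
      rw [Nat.cast_mul]
      exact mul_le_mul_of_nonneg_left (le_of_lt hKlt) (by positivity)
    have hcceq : (cc:ℝ) = 2*(q₀:ℝ)*(nB:ℝ)*(W.card:ℝ)*(P'.card:ℝ) + 1 := by
      rw [hcc]; push_cast; ring
    have c2 : (nB:ℝ) * ((W.card * P'.card) * ((1/cc)*F₁.card)) < F₁.card / (2*(q₀:ℝ)) := by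
      have hgoal : (nB:ℝ) * ((W.card * P'.card) * ((1/cc)*F₁.card))
          = ((nB:ℝ)*W.card*P'.card*F₁.card) / cc := by ring
      rw [hgoal, div_lt_div_iff₀ hccpos hq₀R, hcceq]
      nlinarith [hF₁pos]
    have c3 : (F₁.card:ℝ) / (2*(q₀:ℝ)) ≤ R'.card := by
      rw [div_le_iff₀ hq₀R]
      push_cast at hR'F ⊢
      linarith
    have : ((nB * Kc.card : ℕ) : ℝ) < ((R'.card : ℕ) : ℝ) := lt_of_le_of_lt c1 (lt_of_lt_of_le c2 c3)
    exact_mod_cast this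
  -- pigeonhole
  set Φ : (↥R' → Bool) → (↥Kc → V.B) := fun w a => ycfg w (a : G) with hΦdef
  have hcard : Fintype.card (↥Kc → V.B) < Fintype.card (↥R' → Bool) := by
    rw [Fintype.card_fun, Fintype.card_fun, Fintype.card_coe, Fintype.card_coe,
      Fintype.card_bool]
    calc nB ^ Kc.card ≤ (2^nB)^Kc.card :=
          Nat.pow_le_pow_left (le_of_lt Nat.lt_two_pow_self) _
      _ = 2 ^ (nB * Kc.card) := (pow_mul 2 nB Kc.card).symm
      _ < 2 ^ R'.card := Nat.pow_lt_pow_right one_lt_two hnum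
  obtain ⟨w, w', hww', hΦeq⟩ := Fintype.exists_ne_map_eq_of_card_lt Φ hcard
  set z : G → V.B := fun h => if h ∈ D then ycfg w h else ycfg w' h with hzdef
  have hzY : z ∈ V.Y := by
    apply sft_glue hYpat Pb hPsupp (hycfgY w) (hycfgY w') D
    intro a haD hex
    have haK : a ∈ Kc := Finset.mem_filter.mpr ⟨haD, hex⟩
    have := congrFun hΦeq (⟨a, haK⟩ : ↥Kc)
    exact this
  -- window computations
  have hwin : ∀ (y y' : G → V.B), y ∈ V.Y → y' ∈ V.Y → ∀ g : G,
      (∀ v ∈ W, y (g*v) = y' (g*v)) → V.phi y g = V.phi y' g := by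
    intro y y' hy hy' g hag
    have hsy := V.subY.2 y hy g⁻¹
    simp only [inv_inv] at hsy
    have hsy' := V.subY.2 y' hy' g⁻¹
    simp only [inv_inv] at hsy'
    have hWeq := hW _ hsy _ hsy' (fun v hv => hag v hv)
    have he := V.equiv y hy g⁻¹
    simp only [inv_inv] at he
    have he' := V.equiv y' hy' g⁻¹
    simp only [inv_inv] at he'
    have e1 := congrFun he 1
    have e2 := congrFun he' 1
    rw [mul_one] at e1 e2
    rw [← e1, ← e2]
    exact hWeq
  set x'' : G → Fin 3 := V.phi z with hx''def
  have hx''X : x'' ∈ Xcoh G := by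
    rw [← V.image]
    exact ⟨z, hzY, rfl⟩
  have hinD : ∀ g : G, g ∈ F₁ → ∀ v ∈ W, g * v ∈ D :=
    fun g hg v hv => Finset.mul_mem_mul hg hv
  have hxin : ∀ g ∈ F₁, x'' g = xcfg w g := by
    intro g hg
    have hz_y : ∀ v ∈ W, z (g*v) = ycfg w (g*v) := by
      intro v hv
      rw [hzdef]
      simp only [if_pos (hinD g hg v hv)]
    rw [hx''def, hwin z (ycfg w) hzY (hycfgY w) g hz_y, hycfgPhi w]
  have hxout : ∀ g : G, (∀ v ∈ W, g * v ∉ D) → x'' g = xcfg w' g := by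
    intro g hgv
    have hz_y : ∀ v ∈ W, z (g*v) = ycfg w' (g*v) := by
      intro v hv
      rw [hzdef]
      simp only [if_neg (hgv v hv)]
    rw [hx''def, hwin z (ycfg w') hzY (hycfgY w') g hz_y, hycfgPhi w']
  have htout : ∀ v ∈ W, t * v ∉ D := by
    intro v hv hmem
    apply htE
    have he : t = (t * v) * v⁻¹ * (1:G)⁻¹ := by group
    rw [hEdef, he]
    exact Finset.mem_union_left _ (Finset.mul_mem_mul
      (Finset.mul_mem_mul hmem (Finset.inv_mem_inv hv)) (Finset.inv_mem_inv h1F₁))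
  have htrout : ∀ (r:G), r ∈ F₁ → ∀ v ∈ W, (t * r) * v ∉ D := by
    intro r hr v hv hmem
    apply htE
    have he : t = ((t*r)*v) * v⁻¹ * r⁻¹ := by group
    rw [hEdef, he]
    exact Finset.mem_union_left _ (Finset.mul_mem_mul
      (Finset.mul_mem_mul hmem (Finset.inv_mem_inv hv)) (Finset.inv_mem_inv hr))
  have h1 : x'' 1 = 2 := by rw [hxin 1 h1F₁]; exact hxcfg1 w
  have h2 : x'' t = 2 := by
    rw [hxout t htout]
    have := hxcfgt w' 1
    rw [mul_one] at this
    rw [this]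
    exact hxcfg1 w'
  have hkey : ∀ r : ↥R', w r = w' r := by
    intro r
    have hrF : (r:G) ∈ F₁ := hR'sub r.2
    have e1 : x'' (1 * (r:G)) = x'' (t * (r:G)) := hx''X 1 t (r:G) h1 h2
    rw [one_mul] at e1
    rw [hxin (r:G) hrF, hxcfgr w r] at e1
    rw [hxout (t*(r:G)) (htrout (r:G) hrF), hxcfgt w' (r:G), hxcfgr w' r] at e1
    cases hw : w r <;> cases hw' : w' r
    · rfl
    · rw [hw, hw'] at e1
      exact absurd e1 (by decide)
    · rw [hw, hw'] at e1
      exact absurd e1 (by decide)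
    · rfl
  exact hww' (funext fun r => hkey r)
/-- Every infinite finitely generated amenable group admits a `G`-effectively
closed subshift over the alphabet `{0,1,2}` which is not sofic. -/
theorem amenable_gEffectivelyClosed_not_sofic
    {G : Type} [Group G] [Infinite G] {k : ℕ} (S : Fin k → G) (hS : IsGenData S)
    (ham : FolnerAmenable G) :
    ∃ X : Set (G → Fin 3), IsSubshift X ∧ GEffectivelyClosed S X ∧ ¬ IsSofic X := by
  refine ⟨Xcoh G, isSubshift_Xcoh, ⟨Ccoh k, RePredIn.of_rePred (rePred_Ccoh k), Xcoh_eq_XC hS⟩, ?_⟩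
  exact not_isSofic_Xcoh S hS.2.2 ham

end SDG
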